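/- If z is a pure state of n qudits and B ⊆ A ⊆ {1,…,n} are subsets such that the purity with respect to A is minimal, π_A(z) = 1/d^{|A|}, then the purity with respect to B is also minimal: π_B(z) = 1/d^{|B|}. In particular, a state whose purity equals 1/d^{⌊n/2⌋} for every balanced bipartition (|A| = ⌊n/2⌋) has minimal purity 1/d^{|B|} for every bipartition with |B| ≤ ⌊n/2⌋. -/

import Mathlib

open scoped BigOperators Classical ComplexOrder
open Finset MeasureTheory

noncomputable section

/-- Indicator (Kronecker delta) that two strings `k, l ∈ (ZMod d)^n` agree on all
positions in `A` (i.e. `k_A = l_A`). -/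
def agree {d n : ℕ} (A : Finset (Fin n)) (k l : Fin n → ZMod d) : ℝ :=
  if ∀ j ∈ A, k j = l j then 1 else 0

/-- Purity of a state `z` with respect to the bipartition `(A, Aᶜ)`:
`π_A(z) = ∑ z_k z_{k'} conj(z_l) conj(z_{l'}) [k'_A = l_A][k_A = l'_A][k_Ā = l_Ā][k'_Ā = l'_Ā]`. -/
def purity {d n : ℕ} [NeZero d] (A : Finset (Fin n)) (z : (Fin n → ZMod d) → ℂ) : ℂ :=
  ∑ k, ∑ k', ∑ l, ∑ l',
    z k * z k' * (starRingEnd ℂ) (z l) * (starRingEnd ℂ) (z l') *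
      (agree A k' l : ℂ) * (agree A k l' : ℂ) * (agree Aᶜ k l : ℂ) * (agree Aᶜ k' l' : ℂ)

/-- The potential of multipartite entanglement: the average of the purities over all
balanced bipartitions (`|A| = ⌊n/2⌋`). -/
def piME {d n : ℕ} [NeZero d] (z : (Fin n → ZMod d) → ℂ) : ℂ :=
  ((n.choose (n / 2) : ℂ))⁻¹ *
    ∑ A ∈ (Finset.univ : Finset (Fin n)).powersetCard (n / 2), purity A z

/-- A pure state of `n` qudits: a normalized vector of Fourier coefficients. -/
def IsPureState {d n : ℕ} [NeZero d] (z : (Fin n → ZMod d) → ℂ) : Prop :=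
  ∑ k, ‖z k‖ ^ 2 = 1

/-- Purity with respect to `A` expressed through any splitting `e` of strings into an
`A`-part and an `Aᶜ`-part: it is the (real, nonnegative) sum `∑ ‖σ(p,p')‖²` of the squared
entries of the reduced density matrix `σ(p,p') = ∑_q z(p,q) conj(z(p',q))`. -/
lemma purity_eq {d n : ℕ} [NeZero d] {P Q : Type*} [Fintype P] [Fintype Q]
    (A : Finset (Fin n)) (z : (Fin n → ZMod d) → ℂ) (e : (Fin n → ZMod d) ≃ P × Q)
    (h1 : ∀ u v, (∀ j ∈ A, u j = v j) ↔ (e u).1 = (e v).1)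
    (h2 : ∀ u v, (∀ j ∈ Aᶜ, u j = v j) ↔ (e u).2 = (e v).2) :
    purity A z =
      ((∑ p, ∑ p', ‖∑ q, z (e.symm (p, q)) * (starRingEnd ℂ) (z (e.symm (p', q)))‖ ^ 2 : ℝ) : ℂ) := by
  have hagA : ∀ u v, ((agree A u v : ℝ) : ℂ) = if (e u).1 = (e v).1 then 1 else 0 := by
    intro u v
    simp only [agree]
    rw [if_congr (h1 u v) rfl rfl]
    split <;> simp
  have hagC : ∀ u v, ((agree Aᶜ u v : ℝ) : ℂ) = if (e u).2 = (e v).2 then 1 else 0 := by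
    intro u v
    simp only [agree]
    rw [if_congr (h2 u v) rfl rfl]
    split <;> simp
  have hsum : ∀ (f : (Fin n → ZMod d) → ℂ), ∑ k, f k = ∑ pq : P × Q, f (e.symm pq) :=
    fun f => (Equiv.sum_comp e.symm f).symm
  unfold purity
  simp only [hagA, hagC, hsum, Fintype.sum_prod_type, Equiv.apply_symm_apply]
  simp only [mul_ite, mul_one, mul_zero, ite_mul, zero_mul, one_mul,
    Finset.sum_ite_eq, Finset.sum_ite_eq', Finset.mem_univ, if_true,
    Finset.sum_ite_irrel, Finset.sum_const_zero]
  rw [Complex.ofReal_sum]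
  refine Finset.sum_congr rfl fun x _ => ?_
  rw [Finset.sum_comm, Complex.ofReal_sum]
  refine Finset.sum_congr rfl fun x' _ => ?_
  rw [Complex.sq_norm, ← Complex.mul_conj, map_sum, Finset.sum_mul_sum]
  refine Finset.sum_congr rfl fun q _ => Finset.sum_congr rfl fun q' _ => ?_
  simp only [map_mul, Complex.conj_conj]
  ring

/-- The purity of a normalized state is at least `1 / (number of `A`-configurations)`. -/
lemma lower_bound {P Q : Type*} [Fintype P] [Fintype Q] (w : P → Q → ℂ)
    (hw : ∑ p, ∑ q, ‖w p q‖ ^ 2 = 1) :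
    1 / (Fintype.card P : ℝ) ≤
      ∑ p, ∑ p', ‖∑ q, w p q * (starRingEnd ℂ) (w p' q)‖ ^ 2 := by
  have hP : 0 < (Fintype.card P : ℝ) := by
    rcases isEmpty_or_nonempty P with h | h
    · simp at hw
    · exact_mod_cast Fintype.card_pos
  set s : P → ℝ := fun p => ∑ q, ‖w p q‖ ^ 2 with hs
  have hsnn : ∀ p, 0 ≤ s p := fun p => Finset.sum_nonneg fun q _ => sq_nonneg _
  have hdiag : ∀ p, ‖∑ q, w p q * (starRingEnd ℂ) (w p q)‖ ^ 2 = s p ^ 2 := by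
    intro p
    have : ∑ q, w p q * (starRingEnd ℂ) (w p q) = ((s p : ℝ) : ℂ) := by
      rw [hs, Complex.ofReal_sum]
      refine Finset.sum_congr rfl fun q _ => ?_
      rw [Complex.mul_conj, Complex.normSq_eq_norm_sq]
    rw [this, Complex.norm_real, Real.norm_eq_abs, sq_abs]
  have h1 : ∑ p, s p ^ 2 ≤ ∑ p, ∑ p', ‖∑ q, w p q * (starRingEnd ℂ) (w p' q)‖ ^ 2 := by
    refine Finset.sum_le_sum fun p _ => ?_
    rw [← hdiag p]
    exact Finset.single_le_sum
      (f := fun p' => ‖∑ q, w p q * (starRingEnd ℂ) (w p' q)‖ ^ 2)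
      (fun p' _ => sq_nonneg _) (Finset.mem_univ p)
  have h2 : (1 : ℝ) ≤ (Fintype.card P : ℝ) * ∑ p, s p ^ 2 := by
    have hcs := Finset.sum_mul_sq_le_sq_mul_sq Finset.univ (fun _ : P => (1 : ℝ)) s
    simp only [one_mul, one_pow] at hcs
    have : ∑ p, s p = 1 := by rw [hs, ← hw]
    rw [this] at hcs
    simpa [Finset.sum_const, Finset.card_univ] using hcs
  have h3 := mul_le_mul_of_nonneg_left h1 (le_of_lt hP)
  rw [div_le_iff₀ hP, mul_comm]
  linarith

/-- Tracing out the `Y`-component increases the purity by at most a factor `card Y`. -/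
lemma upper_bound {X Y C : Type*} [Fintype X] [Fintype Y] [Fintype C]
    (w : X → Y → C → ℂ) :
    ∑ x, ∑ x', ‖∑ q : Y × C, w x q.1 q.2 * (starRingEnd ℂ) (w x' q.1 q.2)‖ ^ 2 ≤
      (Fintype.card Y : ℝ) *
        ∑ p : X × Y, ∑ p' : X × Y,
          ‖∑ c, w p.1 p.2 c * (starRingEnd ℂ) (w p'.1 p'.2 c)‖ ^ 2 := by
  have key : ∀ x x' : X,
      ‖∑ q : Y × C, w x q.1 q.2 * (starRingEnd ℂ) (w x' q.1 q.2)‖ ^ 2 ≤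
        (Fintype.card Y : ℝ) *
          ∑ y, ∑ y', ‖∑ c, w x y c * (starRingEnd ℂ) (w x' y' c)‖ ^ 2 := by
    intro x x'
    set t : Y → ℂ := fun y => ∑ c, w x y c * (starRingEnd ℂ) (w x' y c) with ht
    have hsplit : ∑ q : Y × C, w x q.1 q.2 * (starRingEnd ℂ) (w x' q.1 q.2) = ∑ y, t y := by
      rw [Fintype.sum_prod_type]
    have h1 : ‖∑ y, t y‖ ^ 2 ≤ (∑ y, ‖t y‖) ^ 2 := by
      have := norm_sum_le Finset.univ t
      exact pow_le_pow_left₀ (norm_nonneg _) this 2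
    have h2 : (∑ y, ‖t y‖) ^ 2 ≤ (Fintype.card Y : ℝ) * ∑ y, ‖t y‖ ^ 2 := by
      have hcs := Finset.sum_mul_sq_le_sq_mul_sq Finset.univ (fun _ : Y => (1 : ℝ))
        (fun y => ‖t y‖)
      simp only [one_mul, one_pow] at hcs
      simpa [Finset.sum_const, Finset.card_univ] using hcs
    have h3 : ∑ y, ‖t y‖ ^ 2 ≤ ∑ y, ∑ y', ‖∑ c, w x y c * (starRingEnd ℂ) (w x' y' c)‖ ^ 2 := by
      refine Finset.sum_le_sum fun y _ => ?_
      exact Finset.single_le_sum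
        (f := fun y' => ‖∑ c, w x y c * (starRingEnd ℂ) (w x' y' c)‖ ^ 2)
        (fun y' _ => sq_nonneg _) (Finset.mem_univ y)
    have h4 := mul_le_mul_of_nonneg_left h3 (Nat.cast_nonneg (Fintype.card Y) : (0:ℝ) ≤ _)
    rw [hsplit]
    linarith
  calc ∑ x, ∑ x', ‖∑ q : Y × C, w x q.1 q.2 * (starRingEnd ℂ) (w x' q.1 q.2)‖ ^ 2
      ≤ ∑ x, ∑ x', (Fintype.card Y : ℝ) *
          ∑ y, ∑ y', ‖∑ c, w x y c * (starRingEnd ℂ) (w x' y' c)‖ ^ 2 :=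
        Finset.sum_le_sum fun x _ => Finset.sum_le_sum fun x' _ => key x x'
    _ = (Fintype.card Y : ℝ) *
        ∑ p : X × Y, ∑ p' : X × Y, ‖∑ c, w p.1 p.2 c * (starRingEnd ℂ) (w p'.1 p'.2 c)‖ ^ 2 := by
        simp only [Fintype.sum_prod_type, ← Finset.mul_sum]
        congr 1
        refine Finset.sum_congr rfl fun x _ => ?_
        rw [Finset.sum_comm]

/-- Split a string into its `B`-part, `(A\B)`-part and `Aᶜ`-part. -/
def splitE {d n : ℕ} (A B : Finset (Fin n)) (hBA : B ⊆ A) :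
    (Fin n → ZMod d) ≃
      ({j // j ∈ B} → ZMod d) × ({j // j ∈ A \ B} → ZMod d) × ({j // j ∉ A} → ZMod d) where
  toFun u := (fun j => u j, fun j => u j, fun j => u j)
  invFun p := fun j =>
    if h : j ∈ B then p.1 ⟨j, h⟩
    else if h' : j ∈ A then p.2.1 ⟨j, Finset.mem_sdiff.mpr ⟨h', h⟩⟩
    else p.2.2 ⟨j, h'⟩
  left_inv u := by
    funext j
    by_cases h : j ∈ B <;> by_cases h' : j ∈ A <;> simp [h, h']
  right_inv p := by
    refine Prod.ext ?_ (Prod.ext ?_ ?_)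
    · funext j
      simp [j.2]
    · funext j
      have hj := Finset.mem_sdiff.mp j.2
      simp [hj.1, hj.2]
    · funext j
      have h1 : (j : Fin n) ∉ A := j.2
      have h2 : (j : Fin n) ∉ B := fun hb => h1 (hBA hb)
      simp [h1, h2]

/-- Main step: minimal purity passes to subsets. -/
lemma purity_subset {d n : ℕ} [NeZero d] (A B : Finset (Fin n)) (hBA : B ⊆ A)
    (z : (Fin n → ZMod d) → ℂ) (hz : IsPureState z)
    (hA : purity A z = 1 / (d : ℂ) ^ A.card) :
    purity B z = 1 / (d : ℂ) ^ B.card := by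
  classical
  let E := splitE (d := d) A B hBA
  let eA := E.trans (Equiv.prodAssoc _ _ _).symm
  -- hypotheses for purity_eq at B
  have hB1 : ∀ u v : Fin n → ZMod d, (∀ j ∈ B, u j = v j) ↔ (E u).1 = (E v).1 := by
    intro u v
    constructor
    · intro h; funext j; exact h j j.2
    · intro h j hj; exact congrFun h ⟨j, hj⟩
  have hB2 : ∀ u v : Fin n → ZMod d, (∀ j ∈ Bᶜ, u j = v j) ↔ (E u).2 = (E v).2 := by
    intro u v
    constructor
    · intro h
      refine Prod.ext ?_ ?_ <;> funext j
      · exact h j (Finset.mem_compl.mpr (Finset.mem_sdiff.mp j.2).2)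
      · exact h j (Finset.mem_compl.mpr fun hb => j.2 (hBA hb))
    · intro h j hj
      rw [Finset.mem_compl] at hj
      by_cases hA' : j ∈ A
      · exact congrFun (Prod.ext_iff.mp h).1 ⟨j, Finset.mem_sdiff.mpr ⟨hA', hj⟩⟩
      · exact congrFun (Prod.ext_iff.mp h).2 ⟨j, hA'⟩
  have hA1 : ∀ u v : Fin n → ZMod d, (∀ j ∈ A, u j = v j) ↔ (eA u).1 = (eA v).1 := by
    intro u v
    constructor
    · intro h
      refine Prod.ext ?_ ?_ <;> funext j
      · exact h j (hBA j.2)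
      · exact h j (Finset.mem_sdiff.mp j.2).1
    · intro h j hj
      by_cases hb : j ∈ B
      · exact congrFun (Prod.ext_iff.mp h).1 ⟨j, hb⟩
      · exact congrFun (Prod.ext_iff.mp h).2 ⟨j, Finset.mem_sdiff.mpr ⟨hj, hb⟩⟩
  have hA2 : ∀ u v : Fin n → ZMod d, (∀ j ∈ Aᶜ, u j = v j) ↔ (eA u).2 = (eA v).2 := by
    intro u v
    constructor
    · intro h; funext j; exact h j (Finset.mem_compl.mpr j.2)
    · intro h j hj; exact congrFun h ⟨j, Finset.mem_compl.mp hj⟩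
  -- purity at B and A as real sums
  have SB := purity_eq B z E hB1 hB2
  have SA := purity_eq A z eA hA1 hA2
  -- normalization
  have hw : ∑ p, ∑ q, ‖z (E.symm (p, q))‖ ^ 2 = 1 := by
    have h0 : ∑ pq, ‖z (E.symm pq)‖ ^ 2 = 1 := by
      rw [Equiv.sum_comp E.symm (fun k => ‖z k‖ ^ 2)]; exact hz
    rw [Fintype.sum_prod_type] at h0
    exact h0
  set SBr : ℝ := ∑ p, ∑ p',
    ‖∑ q, z (E.symm (p, q)) * (starRingEnd ℂ) (z (E.symm (p', q)))‖ ^ 2 with hSBr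
  set SAr : ℝ := ∑ p, ∑ p',
    ‖∑ c, z (eA.symm (p, c)) * (starRingEnd ℂ) (z (eA.symm (p', c)))‖ ^ 2 with hSAr
  have hSArval : SAr = 1 / (d : ℝ) ^ A.card := by
    have h1 : ((SAr : ℝ) : ℂ) = ((1 / (d : ℝ) ^ A.card : ℝ) : ℂ) := by
      rw [← SA, hA]; push_cast; ring
    exact_mod_cast h1
  -- lower bound for SBr
  have hlow : 1 / (Fintype.card ({j // j ∈ B} → ZMod d) : ℝ) ≤ SBr :=
    lower_bound (fun p q => z (E.symm (p, q))) hw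
  -- upper bound: SBr ≤ card Y * SAr
  have hup : SBr ≤ (Fintype.card ({j // j ∈ A \ B} → ZMod d) : ℝ) * SAr := by
    have h := upper_bound (fun x y c => z (E.symm (x, (y, c))))
    have hL : (∑ x, ∑ x',
        ‖∑ q : ({j // j ∈ A \ B} → ZMod d) × ({j // j ∉ A} → ZMod d),
          z (E.symm (x, (q.1, q.2))) * (starRingEnd ℂ) (z (E.symm (x', (q.1, q.2))))‖ ^ 2)
        = SBr := rfl
    have hR : (∑ p : ({j // j ∈ B} → ZMod d) × ({j // j ∈ A \ B} → ZMod d),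
        ∑ p' : ({j // j ∈ B} → ZMod d) × ({j // j ∈ A \ B} → ZMod d),
        ‖∑ c, z (E.symm (p.1, (p.2, c))) * (starRingEnd ℂ) (z (E.symm (p'.1, (p'.2, c))))‖ ^ 2)
        = SAr := rfl
    rw [hL, hR] at h
    exact h
  -- cardinalities
  have hdR : (0 : ℝ) < (d : ℝ) := by
    have := NeZero.pos d; exact_mod_cast this
  have hcardX : (Fintype.card ({j // j ∈ B} → ZMod d) : ℝ) = (d : ℝ) ^ B.card := by
    rw [Fintype.card_fun, ZMod.card, Fintype.card_coe]
    push_cast; ring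
  have hcardY : (Fintype.card ({j // j ∈ A \ B} → ZMod d) : ℝ) = (d : ℝ) ^ (A \ B).card := by
    rw [Fintype.card_fun, ZMod.card, Fintype.card_coe]
    push_cast; ring
  have hsplitcard : (A \ B).card + B.card = A.card := by
    have h1 := Finset.card_sdiff_of_subset hBA
    have h2 := Finset.card_le_card hBA
    omega
  have hval : SBr = 1 / (d : ℝ) ^ B.card := by
    have hfac : (d : ℝ) ^ (A \ B).card * (1 / (d : ℝ) ^ A.card) = 1 / (d : ℝ) ^ B.card := by
      rw [← hsplitcard, pow_add]
      field_simp
    rw [hcardY, hSArval, hfac] at hup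
    rw [hcardX] at hlow
    linarith
  rw [SB, hval]
  push_cast
  ring

theorem minimal_purity_subset (d n : ℕ) [NeZero d] (hd : 2 ≤ d) (hn : 1 ≤ n)
    (z : (Fin n → ZMod d) → ℂ) (hz : IsPureState z) :
    (∀ A B : Finset (Fin n), B ⊆ A →
        purity A z = 1 / (d : ℂ) ^ A.card → purity B z = 1 / (d : ℂ) ^ B.card) ∧
      ((∀ A : Finset (Fin n), A.card = n / 2 → purity A z = 1 / (d : ℂ) ^ (n / 2)) →
        ∀ B : Finset (Fin n), B.card ≤ n / 2 → purity B z = 1 / (d : ℂ) ^ B.card) := by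
  constructor
  · intro A B hBA hA
    exact purity_subset A B hBA z hz hA
  · intro hbal B hB
    obtain ⟨A, hBA, hcard⟩ := Finset.exists_superset_card_eq hB
      (by simp [Fintype.card_fin]; omega)
    have hA : purity A z = 1 / (d : ℂ) ^ A.card := by
      rw [hcard]; exact hbal A hcard
    exact purity_subset A B hBA z hz hA
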